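/- Let $p \ge 5$ be a prime and $n \ge 1$. Then the classical normalized Eisenstein series satisfy the $q$-expansion congruence $E_{n(p-1)} \equiv E_{p-1}^n \pmod{p^2}$, i.e., all coefficients of the formal power series $E_{n(p-1)}(q) - E_{p-1}(q)^n \in \mathbb{Z}_p[[q]]$ lie in $p^2 \mathbb{Z}_p$. -/

import Mathlib

open PowerSeries

/-- The `q`-expansion of the classical normalized Eisenstein series `E_k`, as a formal
power series with coefficients in `ℚ_p`:
`E_k = 1 - (2k / B_k) ∑_{m ≥ 1} σ_{k-1}(m) q^m`. -/
noncomputable def eisenstein (p : ℕ) [Fact p.Prime] (k : ℕ) : PowerSeries ℚ_[p] :=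
  PowerSeries.mk fun m =>
    if m = 0 then 1
    else -(2 * (k : ℚ_[p]) / (bernoulli k : ℚ_[p])) * ((∑ d ∈ m.divisors, d ^ (k - 1) : ℕ) : ℚ_[p])

namespace EisensteinCongruenceAux

open Finset


open Finset

/-! ### Elementary norm lemmas -/

variable {p : ℕ} [Fact p.Prime]

lemma norm_nat_le_one (m : ℕ) : ‖(m : ℚ_[p])‖ ≤ 1 := by
  simpa using Padic.norm_int_le_one (p := p) m

lemma norm_sub_le_max' (a b : ℚ_[p]) : ‖a - b‖ ≤ max ‖a‖ ‖b‖ := by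
  rw [sub_eq_add_neg]
  simpa using IsUltrametricDist.norm_add_le_max a (-b)

lemma norm_nat_eq_one {m : ℕ} (h : ¬ p ∣ m) : ‖(m : ℚ_[p])‖ = 1 := by
  refine le_antisymm (norm_nat_le_one m) ?_
  by_contra hlt
  push_neg at hlt
  have := (Padic.norm_intCast_lt_one_iff (p := p) (k := m)).mp (by push_cast; exact hlt)
  exact h (by exact_mod_cast this)

lemma five_pow_ge : ∀ v : ℕ, 1 ≤ v → v + 2 ≤ 5 ^ v := by
  intro v hv
  induction v with
  | zero => omega
  | succ k ih =>
    rcases Nat.eq_zero_or_pos k with h | h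
    · subst h; norm_num
    · have := ih h
      have h5 : 1 ≤ 5 ^ k := Nat.one_le_pow _ _ (by norm_num)
      have : 5 ^ (k+1) = 5 * 5 ^ k := by ring
      omega

lemma norm_p_pow_div_le (hp5 : 5 ≤ p) {m : ℕ} (hm : 2 ≤ m) :
    ‖(p : ℚ_[p]) ^ m / (m : ℚ_[p])‖ ≤ (p : ℝ) ^ (-2 : ℤ) := by
  have hm0 : m ≠ 0 := by omega
  set v := m.factorization p with hv
  have hvm : v + 2 ≤ m := by
    rcases Nat.eq_zero_or_pos v with h | h
    · omega
    · have h1 : 5 ^ v ≤ p ^ v := Nat.pow_le_pow_left hp5 v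
      have h2 : p ^ v ≤ m := Nat.ordProj_le p hm0
      have := five_pow_ge v h
      omega
  have hsplit : (m : ℚ_[p]) = (p : ℚ_[p]) ^ v * ((m / p ^ v : ℕ) : ℚ_[p]) := by
    rw [← Nat.cast_pow, ← Nat.cast_mul, Nat.ordProj_mul_ordCompl_eq_self]
  have hu : ‖((m / p ^ v : ℕ) : ℚ_[p])‖ = 1 :=
    norm_nat_eq_one (Nat.not_dvd_ordCompl Fact.out hm0)
  have hp1 : (1:ℝ) < p := by exact_mod_cast (Fact.out : p.Prime).one_lt
  have hp0 : (0:ℝ) < p := by linarith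
  rw [norm_div, norm_pow, Padic.norm_p, hsplit, norm_mul, norm_pow,
    Padic.norm_p, hu, mul_one]
  rw [← zpow_natCast ((p:ℝ)⁻¹), ← zpow_natCast ((p:ℝ)⁻¹), inv_zpow, inv_zpow,
    ← zpow_neg, ← zpow_neg, ← zpow_sub₀ (by positivity)]
  apply zpow_le_zpow_right₀ hp1.le
  omega

/-! ### von Staudt–Clausen mod `p` -/

lemma choose_id (k i : ℕ) (h : i ≤ k) :
    (k + 1 - i) * (k+1).choose i = (k+1) * k.choose i := by
  have h1 := Nat.add_one_mul_choose_eq k (k - i)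
  rw [Nat.choose_symm h] at h1
  have e : k - i + 1 = k + 1 - i := by omega
  rw [e, Nat.choose_symm (by omega : i ≤ k + 1)] at h1
  rw [mul_comm]
  exact h1.symm

lemma faulhaber_rearranged (p k : ℕ) :
    (p:ℚ) * bernoulli k - ∑ i ∈ range p, (i:ℚ)^k
      = -∑ i ∈ range k, bernoulli i * (k.choose i) * ((p:ℚ)^(k+1-i) / ((k+1-i : ℕ) : ℚ)) := by
  rw [sum_range_pow p k, sum_range_succ]
  have hk1 : ((k:ℚ) + 1) ≠ 0 := by positivity
  have hlast : bernoulli k * (((k+1).choose k : ℕ) : ℚ) * (p:ℚ)^(k+1-k) / ((k:ℚ)+1)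
      = (p:ℚ) * bernoulli k := by
    rw [Nat.choose_succ_self_right, Nat.add_sub_cancel_left, pow_one]
    push_cast
    field_simp
  rw [hlast]
  have hterm : ∀ i ∈ range k,
      bernoulli i * (((k+1).choose i : ℕ) : ℚ) * (p:ℚ)^(k+1-i) / ((k:ℚ)+1)
        = bernoulli i * (k.choose i) * ((p:ℚ)^(k+1-i) / ((k+1-i : ℕ) : ℚ)) := by
    intro i hi
    rw [mem_range] at hi
    have hcq : (((k+1).choose i : ℕ) : ℚ) * ((k+1-i : ℕ) : ℚ)
        = ((k:ℚ)+1) * ((k.choose i : ℕ) : ℚ) := by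
      have h2 : (k+1).choose i * (k+1-i) = (k+1) * k.choose i := by
        rw [mul_comm ((k+1).choose i)]; exact choose_id k i hi.le
      exact_mod_cast congrArg (fun n : ℕ => (n : ℚ)) h2
    have hm0 : ((k + 1 - i : ℕ) : ℚ) ≠ 0 := by
      have : 0 < k + 1 - i := by omega
      positivity
    field_simp
    linear_combination (bernoulli i * (p:ℚ)^(k+1-i)) * hcq
  rw [sum_congr rfl hterm]
  ring

lemma vsc_aux (hp5 : 5 ≤ p) : ∀ k : ℕ,
    ‖(((p:ℚ) * bernoulli k - ∑ i ∈ range p, (i:ℚ)^k : ℚ) : ℚ_[p])‖ ≤ (p:ℝ)⁻¹ := by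
  intro k
  induction k using Nat.strong_induction_on with
  | _ k IH =>
  have hp0 : (0:ℝ) < p := by
    have := (Fact.out : p.Prime).pos; exact_mod_cast this
  have hp1 : (1:ℝ) < p := by
    have := (Fact.out : p.Prime).one_lt; exact_mod_cast this
  have hpinv_le : (p:ℝ)⁻¹ ≤ 1 := by
    rw [inv_le_one_iff₀]; right; exact hp1.le
  have hB : ∀ i, i < k → ‖((bernoulli i : ℚ) : ℚ_[p])‖ ≤ p := by
    intro i hi
    have h1 := IH i hi
    have hS : ‖((∑ i' ∈ range p, (i':ℚ)^i : ℚ) : ℚ_[p])‖ ≤ 1 := by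
      have e : (∑ i' ∈ range p, (i':ℚ)^i) = ((∑ i' ∈ range p, i'^i : ℕ) : ℚ) := by
        push_cast; rfl
      rw [e, Rat.cast_natCast]
      exact norm_nat_le_one _
    have h2 : ‖(((p:ℚ) * bernoulli i : ℚ) : ℚ_[p])‖ ≤ 1 := by
      have e : ((p:ℚ) * bernoulli i : ℚ)
          = ((p:ℚ) * bernoulli i - ∑ i' ∈ range p, (i':ℚ)^i) + ∑ i' ∈ range p, (i':ℚ)^i := by
        ring
      rw [e, Rat.cast_add]
      exact le_trans (IsUltrametricDist.norm_add_le_max _ _)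
        (max_le (h1.trans hpinv_le) hS)
    rw [Rat.cast_mul, Rat.cast_natCast, norm_mul, Padic.norm_p] at h2
    rw [inv_mul_le_iff₀ hp0] at h2
    simpa using h2
  rw [faulhaber_rearranged p k, Rat.cast_neg, norm_neg, Rat.cast_sum]
  apply IsUltrametricDist.norm_sum_le_of_forall_le_of_nonneg (by positivity)
  intro i hi
  rw [mem_range] at hi
  rw [Rat.cast_mul, Rat.cast_mul, Rat.cast_div, Rat.cast_pow, Rat.cast_natCast,
    Rat.cast_natCast, Rat.cast_natCast, norm_mul, norm_mul]
  have key : ‖(bernoulli i : ℚ_[p])‖ * ‖((k.choose i : ℕ) : ℚ_[p])‖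
        * ‖(p : ℚ_[p])^(k+1-i) / ((k+1-i : ℕ) : ℚ_[p])‖
      ≤ (p:ℝ) * 1 * (p:ℝ)^(-2:ℤ) := by
    exact mul_le_mul (mul_le_mul (hB i hi) (norm_nat_le_one _) (norm_nonneg _) hp0.le)
      (norm_p_pow_div_le hp5 (by omega)) (norm_nonneg _) (by positivity)
  refine key.trans ?_
  rw [mul_one, show (-2:ℤ) = -1 + -1 by norm_num, zpow_add₀ (ne_of_gt hp0),
    zpow_neg_one, ← mul_assoc, mul_inv_cancel₀ (ne_of_gt hp0), one_mul]

lemma sum_pow_cong {k : ℕ} (hdvd : (p-1) ∣ k) (hk : k ≠ 0) :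
    (p:ℤ) ∣ ((∑ i ∈ range p, i^k : ℕ) : ℤ) + 1 := by
  have hp : p.Prime := Fact.out
  have h2 : 2 ≤ p := hp.two_le
  have : (((∑ i ∈ range p, i^k : ℕ) : ℤ) + 1 : ZMod p) = 0 := by
    push_cast
    rw [show range p = range ((p-1)+1) by congr 1; omega, Finset.sum_range_succ']
    simp only [Nat.cast_zero, zero_pow hk, Nat.cast_add, Nat.cast_one]
    have hterm : ∀ i ∈ range (p-1), ((i:ZMod p) + 1)^k = 1 := by
      intro i hi
      rw [mem_range] at hi
      have hne : ((i:ZMod p) + 1) ≠ 0 := by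
        have : (((i+1 : ℕ)) : ZMod p) ≠ 0 := by
          rw [Ne, ZMod.natCast_eq_zero_iff]
          intro hdvd'
          have := Nat.le_of_dvd (by omega) hdvd'
          omega
        push_cast at this
        exact this
      obtain ⟨t, ht⟩ := hdvd
      rw [ht, pow_mul, ZMod.pow_card_sub_one_eq_one hne, one_pow]
    rw [Finset.sum_congr rfl hterm]
    simp only [Finset.sum_const, card_range, nsmul_eq_mul, mul_one]
    have hps : ((p:ℕ) : ZMod p) = 0 := ZMod.natCast_self p
    have e2 : ((p - 1 : ℕ) : ZMod p) = ((p : ℕ) : ZMod p) - 1 := by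
      have h3 : ((p - 1 : ℕ) : ZMod p) + 1 = ((p:ℕ) : ZMod p) := by
        rw [show ((p:ℕ) : ZMod p) = ((p - 1 + 1 : ℕ) : ZMod p) by congr 1; omega]
        push_cast; ring
      linear_combination h3
    rw [e2, hps]
    ring
  rwa [← Int.cast_one, ← Int.cast_natCast, ← Int.cast_add, ZMod.intCast_zmod_eq_zero_iff_dvd]
    at this

lemma pB_cong (hp5 : 5 ≤ p) {k : ℕ} (hdvd : (p-1) ∣ k) (hk : k ≠ 0) :
    ‖(p:ℚ_[p]) * ((bernoulli k : ℚ) : ℚ_[p]) + 1‖ ≤ (p:ℝ)⁻¹ := by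
  have h1 := vsc_aux (p := p) hp5 k
  have hS : ‖((∑ i ∈ range p, (i:ℚ)^k : ℚ) : ℚ_[p]) + 1‖ ≤ (p:ℝ)⁻¹ := by
    have e : ((∑ i ∈ range p, (i:ℚ)^k : ℚ) : ℚ_[p]) + 1
        = (((((∑ i ∈ range p, i^k : ℕ) : ℤ) + 1 : ℤ)) : ℚ_[p]) := by
      push_cast; ring
    rw [e]
    have := (Padic.norm_int_le_pow_iff_dvd (p := p)
      (((∑ i ∈ range p, i^k : ℕ) : ℤ) + 1) 1).mpr (by simpa using sum_pow_cong hdvd hk)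
    simpa [zpow_neg_one] using this
  have e : (p:ℚ_[p]) * ((bernoulli k : ℚ) : ℚ_[p]) + 1
      = (((p:ℚ) * bernoulli k - ∑ i ∈ range p, (i:ℚ)^k : ℚ) : ℚ_[p])
        + (((∑ i ∈ range p, (i:ℚ)^k : ℚ) : ℚ_[p]) + 1) := by
    push_cast; ring
  rw [e]
  exact le_trans (IsUltrametricDist.norm_add_le_max _ _) (max_le h1 hS)

lemma norm_pB_eq_one (hp5 : 5 ≤ p) {k : ℕ} (hdvd : (p-1) ∣ k) (hk : k ≠ 0) :
    ‖(p:ℚ_[p]) * ((bernoulli k : ℚ) : ℚ_[p])‖ = 1 := by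
  have h := pB_cong hp5 hdvd hk
  have hp1 : (1:ℝ) < p := by exact_mod_cast (Fact.out : p.Prime).one_lt
  have hlt : ‖(p:ℚ_[p]) * ((bernoulli k : ℚ) : ℚ_[p]) + 1‖ < 1 :=
    lt_of_le_of_lt h (by rw [inv_lt_one_iff₀]; right; exact hp1)
  set x := (p:ℚ_[p]) * ((bernoulli k : ℚ) : ℚ_[p])
  have hle : ‖x‖ ≤ 1 := by
    have e : x = (x + 1) + (-1) := by ring
    rw [e]
    refine le_trans (IsUltrametricDist.norm_add_le_max _ _) (max_le hlt.le ?_)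
    simp
  rcases lt_or_eq_of_le hle with hlt2 | heq
  · exfalso
    have h1 : (1:ℝ) = ‖(x + 1) - x‖ := by norm_num
    have hb := le_trans (le_of_eq h1) (norm_sub_le_max' (x+1) x)
    have := max_lt hlt hlt2
    linarith
  · exact heq

lemma norm_inv_bernoulli_add_p (hp5 : 5 ≤ p) {k : ℕ} (hdvd : (p-1) ∣ k) (hk : k ≠ 0) :
    ‖((bernoulli k : ℚ) : ℚ_[p])⁻¹ + p‖ ≤ (p:ℝ)^(-2:ℤ) := by
  have hp0 : (0:ℝ) < p := by exact_mod_cast (Fact.out : p.Prime).pos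
  have hx1 := norm_pB_eq_one hp5 hdvd hk
  set B := ((bernoulli k : ℚ) : ℚ_[p]) with hB
  set x := (p:ℚ_[p]) * B with hxdef
  have hxne : x ≠ 0 := by
    intro h0; rw [h0] at hx1; simp at hx1
  have hpne : (p:ℚ_[p]) ≠ 0 := by
    intro h0
    apply hxne; rw [hxdef, h0, zero_mul]
  have hBne : B ≠ 0 := by
    intro h0; apply hxne; rw [hxdef, h0, mul_zero]
  have e : B⁻¹ + (p:ℚ_[p]) = (p:ℚ_[p]) * (1 + x) / x := by
    rw [hxdef]
    field_simp
  rw [e, norm_div, norm_mul, hx1, div_one, Padic.norm_p]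
  have h2 : ‖(1:ℚ_[p]) + x‖ ≤ (p:ℝ)⁻¹ := by
    rw [add_comm]; exact pB_cong hp5 hdvd hk
  calc (p:ℝ)⁻¹ * ‖1 + x‖ ≤ (p:ℝ)⁻¹ * (p:ℝ)⁻¹ := by
        exact mul_le_mul_of_nonneg_left h2 (by positivity)
    _ = (p:ℝ)^(-2:ℤ) := by
        rw [show (-2:ℤ) = -1 + -1 by norm_num, zpow_add₀ (ne_of_gt hp0), zpow_neg_one]

lemma norm_inv_bernoulli_le (hp5 : 5 ≤ p) {k : ℕ} (hdvd : (p-1) ∣ k) (hk : k ≠ 0) :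
    ‖((bernoulli k : ℚ) : ℚ_[p])⁻¹‖ ≤ (p:ℝ)⁻¹ := by
  have hp1 : (1:ℝ) < p := by exact_mod_cast (Fact.out : p.Prime).one_lt
  have h := norm_inv_bernoulli_add_p hp5 hdvd hk
  have e : ((bernoulli k : ℚ) : ℚ_[p])⁻¹ = (((bernoulli k : ℚ) : ℚ_[p])⁻¹ + p) - p := by ring
  rw [e]
  refine le_trans (norm_sub_le_max' _ _) (max_le (h.trans ?_) ?_)
  · rw [show (-2:ℤ) = -1 + -1 by norm_num, zpow_add₀ (by positivity), zpow_neg_one]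
    nth_rewrite 3 [show (p:ℝ)⁻¹ = (p:ℝ)⁻¹ * 1 by ring]
    exact mul_le_mul_of_nonneg_left (by rw [inv_le_one_iff₀]; right; exact hp1.le) (by positivity)
  · rw [Padic.norm_p]

/-! ### Sigma congruence -/

lemma sigma_cong (hp5 : 5 ≤ p) {n : ℕ} (hn : 1 ≤ n) (m : ℕ) :
    (p:ℤ) ∣ ((∑ d ∈ m.divisors, d^(n*(p-1)-1) : ℕ) : ℤ)
      - ((∑ d ∈ m.divisors, d^(p-1-1) : ℕ) : ℤ) := by
  have hp : p.Prime := Fact.out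
  have hK1 : n*(p-1)-1 ≠ 0 := by
    have : 4 ≤ p - 1 := by omega
    have : n * (p-1) ≥ 4 := by nlinarith
    omega
  have hk1 : p-1-1 ≠ 0 := by omega
  have : ((((∑ d ∈ m.divisors, d^(n*(p-1)-1) : ℕ) : ℤ)
      - ((∑ d ∈ m.divisors, d^(p-1-1) : ℕ) : ℤ) : ℤ) : ZMod p) = 0 := by
    push_cast
    rw [sub_eq_zero]
    apply Finset.sum_congr rfl
    intro d _
    by_cases hd : (d : ZMod p) = 0
    · rw [hd, zero_pow hK1, zero_pow hk1]
    · obtain ⟨n', rfl⟩ : ∃ n', n = n' + 1 := ⟨n-1, by omega⟩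
      have e : (n'+1)*(p-1)-1 = (p-1)*n' + (p-1-1) := by
        have e1 : (n'+1)*(p-1) = (p-1)*n' + (p-1) := by ring
        omega
      rw [e, pow_add, pow_mul, ZMod.pow_card_sub_one_eq_one hd, one_pow, one_mul]
  rwa [ZMod.intCast_zmod_eq_zero_iff_dvd] at this


/-! ### Power series helpers -/

noncomputable def sigmaSeries (k : ℕ) : PowerSeries ℤ :=
  PowerSeries.mk fun m => if m = 0 then 0 else ((∑ d ∈ m.divisors, d ^ (k - 1) : ℕ) : ℤ)

lemma eisenstein_eq (p : ℕ) [Fact p.Prime] (k : ℕ) :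
    eisenstein p k = 1 + PowerSeries.C (-(2 * (k : ℚ_[p]) / (bernoulli k : ℚ_[p])))
      * PowerSeries.map (Int.castRingHom ℚ_[p]) (sigmaSeries k) := by
  ext m
  simp only [eisenstein, sigmaSeries, map_add, PowerSeries.coeff_mk, PowerSeries.coeff_one,
    PowerSeries.coeff_C_mul, PowerSeries.coeff_map]
  by_cases hm : m = 0 <;> simp [hm]

lemma decomposition (p : ℕ) [Fact p.Prime] (n : ℕ) (hn : 1 ≤ n) (a b : ℚ_[p])
    (T1 TK : PowerSeries ℚ_[p]) :
    (1 + PowerSeries.C b * TK) - (1 + PowerSeries.C a * T1)^n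
      = PowerSeries.C (b - (n:ℚ_[p])*a) * TK
        + PowerSeries.C ((n:ℚ_[p])*a) * (TK - T1)
        - ∑ j ∈ Finset.Ico 2 (n+1),
            PowerSeries.C (a^j * ((n.choose j : ℕ):ℚ_[p])) * T1^j := by
  rw [add_comm (1 : PowerSeries ℚ_[p]) (PowerSeries.C a * T1), add_pow]
  rw [← Finset.sum_range_add_sum_Ico _ (show 2 ≤ n+1 by omega)]
  rw [Finset.sum_range_succ, Finset.sum_range_one]
  have hterm : ∀ j ∈ Finset.Ico 2 (n+1),
      (PowerSeries.C a * T1)^j * (1:PowerSeries ℚ_[p])^(n-j) * ((n.choose j : ℕ) : PowerSeries ℚ_[p])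
        = PowerSeries.C (a^j * ((n.choose j : ℕ):ℚ_[p])) * T1^j := by
    intro j _
    rw [one_pow, mul_one, mul_pow, ← map_pow (PowerSeries.C),
      ← map_natCast (PowerSeries.C) (n.choose j)]
    rw [mul_assoc, mul_comm (T1^j), ← mul_assoc, ← map_mul]
  rw [Finset.sum_congr rfl hterm]
  simp only [pow_zero, pow_one, one_pow, mul_one, one_mul, Nat.choose_zero_right,
    Nat.choose_one_right, Nat.cast_one]
  rw [← map_natCast (PowerSeries.C) n]
  simp only [map_mul, map_sub]
  ring

lemma main_bound (n : ℕ) (hn : 1 ≤ n) (m : ℕ) (a b : ℚ_[p]) (S1 SK : PowerSeries ℤ)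
    (hnorm_a : ‖a‖ ≤ (p:ℝ)⁻¹)
    (hnorm_ba : ‖b - (n:ℚ_[p])*a‖ ≤ (p:ℝ)^(-2:ℤ))
    (hdvd : (p:ℤ) ∣ (PowerSeries.coeff m SK - PowerSeries.coeff m S1)) :
    ‖PowerSeries.coeff m
        ((1 + PowerSeries.C b * PowerSeries.map (Int.castRingHom ℚ_[p]) SK)
          - (1 + PowerSeries.C a * PowerSeries.map (Int.castRingHom ℚ_[p]) S1)^n)‖
      ≤ (p:ℝ)^(-2:ℤ) := by
  have hp : p.Prime := Fact.out
  have hp0R : (0:ℝ) < p := by exact_mod_cast hp.pos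
  have hp1R : (1:ℝ) < p := by exact_mod_cast hp.one_lt
  have hpinv1 : (p:ℝ)⁻¹ ≤ 1 := by rw [inv_le_one_iff₀]; right; exact hp1R.le
  have hinv2 : (p:ℝ)⁻¹ * (p:ℝ)⁻¹ = (p:ℝ)^(-2:ℤ) := by
    rw [show (-2:ℤ) = -1 + -1 by norm_num, zpow_add₀ (ne_of_gt hp0R), zpow_neg_one]
  have h20 : (0:ℝ) ≤ (p:ℝ)^(-2:ℤ) := by positivity
  have hθnorm : ∀ z : ℤ, ‖(Int.castRingHom ℚ_[p]) z‖ ≤ 1 := fun z => by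
    simpa using Padic.norm_int_le_one (p := p) z
  rw [decomposition p n hn a b _ _, map_sub, map_add]
  refine le_trans (norm_sub_le_max' _ _)
    (max_le (le_trans (IsUltrametricDist.norm_add_le_max _ _) (max_le ?_ ?_)) ?_)
  · -- first piece
    rw [PowerSeries.coeff_C_mul, PowerSeries.coeff_map, norm_mul]
    calc ‖b - (n:ℚ_[p])*a‖ * ‖(Int.castRingHom ℚ_[p]) (PowerSeries.coeff m SK)‖
        ≤ (p:ℝ)^(-2:ℤ) * 1 := mul_le_mul hnorm_ba (hθnorm _) (norm_nonneg _) h20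
      _ = (p:ℝ)^(-2:ℤ) := mul_one _
  · -- second piece
    rw [PowerSeries.coeff_C_mul, map_sub, PowerSeries.coeff_map, PowerSeries.coeff_map,
      ← map_sub (Int.castRingHom ℚ_[p]), norm_mul]
    have h1 : ‖(n:ℚ_[p]) * a‖ ≤ (p:ℝ)⁻¹ := by
      rw [norm_mul]
      calc ‖(n:ℚ_[p])‖ * ‖a‖ ≤ 1 * (p:ℝ)⁻¹ :=
            mul_le_mul (norm_nat_le_one n) hnorm_a (norm_nonneg _) zero_le_one
        _ = (p:ℝ)⁻¹ := one_mul _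
    have h2 : ‖(Int.castRingHom ℚ_[p]) (PowerSeries.coeff m SK - PowerSeries.coeff m S1)‖
        ≤ (p:ℝ)⁻¹ := by
      have := (Padic.norm_int_le_pow_iff_dvd (p := p)
        (PowerSeries.coeff m SK - PowerSeries.coeff m S1) 1).mpr (by simpa using hdvd)
      simpa [zpow_neg_one] using this
    calc ‖(n:ℚ_[p]) * a‖ * ‖_‖ ≤ (p:ℝ)⁻¹ * (p:ℝ)⁻¹ :=
          mul_le_mul h1 h2 (norm_nonneg _) (by positivity)
      _ = (p:ℝ)^(-2:ℤ) := hinv2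
  · -- third piece
    rw [map_sum]
    apply IsUltrametricDist.norm_sum_le_of_forall_le_of_nonneg h20
    intro j hj
    rw [Finset.mem_Ico] at hj
    rw [← map_pow (PowerSeries.map (Int.castRingHom ℚ_[p])), PowerSeries.coeff_C_mul,
      PowerSeries.coeff_map, norm_mul, norm_mul, norm_pow]
    have ha : ‖a‖^j ≤ (p:ℝ)^(-2:ℤ) := by
      calc ‖a‖^j ≤ ((p:ℝ)⁻¹)^j := pow_le_pow_left₀ (norm_nonneg _) hnorm_a j
        _ ≤ ((p:ℝ)⁻¹)^2 := pow_le_pow_of_le_one (by positivity) hpinv1 hj.1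
        _ = (p:ℝ)^(-2:ℤ) := by rw [sq]; exact hinv2
    calc ‖a‖^j * ‖((n.choose j : ℕ) : ℚ_[p])‖ * ‖(Int.castRingHom ℚ_[p]) _‖
        ≤ (p:ℝ)^(-2:ℤ) * 1 * 1 := by
          exact mul_le_mul (mul_le_mul ha (norm_nat_le_one _) (norm_nonneg _) h20)
            (hθnorm _) (norm_nonneg _) (by positivity)
      _ = (p:ℝ)^(-2:ℤ) := by ring

end EisensteinCongruenceAux

open EisensteinCongruenceAux in
/-- For a prime `p ≥ 5` and `n ≥ 1`, the congruence `E_{n(p-1)} ≡ E_{p-1}^n (mod p²)`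
holds coefficientwise: every coefficient of the difference has `p`-adic norm `≤ p^{-2}`. -/
theorem eisenstein_congruence_pow (p : ℕ) [Fact p.Prime] (hp5 : 5 ≤ p)
    (n : ℕ) (hn : 1 ≤ n) (m : ℕ) :
    ‖PowerSeries.coeff m (eisenstein p (n * (p - 1)) - (eisenstein p (p - 1)) ^ n)‖
      ≤ (p : ℝ) ^ (-2 : ℤ) := by
  have hk10 : p - 1 ≠ 0 := by omega
  have hK0 : n * (p - 1) ≠ 0 := Nat.mul_ne_zero (by omega) hk10
  have hKdvd : (p - 1) ∣ n * (p - 1) := dvd_mul_left _ _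
  rw [eisenstein_eq p (n * (p - 1)), eisenstein_eq p (p - 1)]
  apply main_bound n hn m _ _ _ _ ?_ ?_ ?_
  · -- ‖a‖ ≤ p⁻¹
    rw [norm_neg, div_eq_mul_inv, norm_mul]
    have h2 : ‖(2 : ℚ_[p]) * ((p - 1 : ℕ) : ℚ_[p])‖ ≤ 1 := by
      rw [show (2 : ℚ_[p]) * ((p - 1 : ℕ) : ℚ_[p]) = ((2 * (p - 1) : ℕ) : ℚ_[p]) by
        push_cast; ring]
      exact norm_nat_le_one _
    calc ‖(2 : ℚ_[p]) * ((p - 1 : ℕ) : ℚ_[p])‖ * ‖(bernoulli (p - 1) : ℚ_[p])⁻¹‖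
        ≤ 1 * (p : ℝ)⁻¹ := mul_le_mul h2 (norm_inv_bernoulli_le hp5 (dvd_refl _) hk10)
          (norm_nonneg _) zero_le_one
      _ = (p : ℝ)⁻¹ := one_mul _
  · -- ‖b - n•a‖ ≤ p^(-2)
    have e : -(2 * ((n * (p - 1) : ℕ) : ℚ_[p]) / (bernoulli (n * (p - 1)) : ℚ_[p]))
          - (n : ℚ_[p]) * -(2 * ((p - 1 : ℕ) : ℚ_[p]) / (bernoulli (p - 1) : ℚ_[p]))
        = -(2 * ((n * (p - 1) : ℕ) : ℚ_[p]))
            * ((bernoulli (n * (p - 1)) : ℚ_[p])⁻¹ - (bernoulli (p - 1) : ℚ_[p])⁻¹) := by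
      rw [div_eq_mul_inv, div_eq_mul_inv, Nat.cast_mul]
      ring
    rw [e, norm_mul]
    have h1 : ‖-(2 * ((n * (p - 1) : ℕ) : ℚ_[p]))‖ ≤ 1 := by
      rw [norm_neg, show (2 : ℚ_[p]) * ((n * (p - 1) : ℕ) : ℚ_[p])
          = ((2 * (n * (p - 1)) : ℕ) : ℚ_[p]) by push_cast; ring]
      exact norm_nat_le_one _
    have h2 : ‖(bernoulli (n * (p - 1)) : ℚ_[p])⁻¹ - (bernoulli (p - 1) : ℚ_[p])⁻¹‖
        ≤ (p : ℝ) ^ (-2 : ℤ) := by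
      rw [show (bernoulli (n * (p - 1)) : ℚ_[p])⁻¹ - (bernoulli (p - 1) : ℚ_[p])⁻¹
          = ((bernoulli (n * (p - 1)) : ℚ_[p])⁻¹ + p) - ((bernoulli (p - 1) : ℚ_[p])⁻¹ + p) by
        ring]
      exact le_trans (norm_sub_le_max' _ _)
        (max_le (norm_inv_bernoulli_add_p hp5 hKdvd hK0)
          (norm_inv_bernoulli_add_p hp5 (dvd_refl _) hk10))
    calc ‖-(2 * ((n * (p - 1) : ℕ) : ℚ_[p]))‖
          * ‖(bernoulli (n * (p - 1)) : ℚ_[p])⁻¹ - (bernoulli (p - 1) : ℚ_[p])⁻¹‖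
        ≤ 1 * (p : ℝ) ^ (-2 : ℤ) := mul_le_mul h1 h2 (norm_nonneg _) zero_le_one
      _ = (p : ℝ) ^ (-2 : ℤ) := one_mul _
  · -- divisibility of the sigma coefficients
    simp only [sigmaSeries, PowerSeries.coeff_mk]
    by_cases hm : m = 0
    · simp [hm]
    · simp only [hm, if_false]
      exact sigma_cong hp5 hn m
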